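/- Let p_1, …, p_k be distinct primes, let c_1, …, c_k be nonnegative integers, and let n be a natural number with n = c_1/p_1 + … + c_k/p_k. Then p_i divides c_i for every i = 1, …, k. -/
import Mathlib


open scoped BigOperators

/-- A Puiseux monoid: an additive submonoid of ℚ consisting of nonnegative elements. -/
def IsPuiseux (M : AddSubmonoid ℚ) : Prop := ∀ x ∈ M, (0:ℚ) ≤ x

/-- `a` is an atom of the submonoid `S`. -/
def IsAtomOf {α : Type*} [AddCommMonoid α] (S : AddSubmonoid α) (a : α) : Prop :=
  a ∈ S ∧ a ≠ 0 ∧ ∀ u v : α, u ∈ S → v ∈ S → a = u + v → u = 0 ∨ v = 0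

/-- `x` has a factorization of length `n` into atoms of `S`. -/
def IsLengthOf {α : Type*} [AddCommMonoid α] (S : AddSubmonoid α) (x : α) (n : ℕ) : Prop :=
  ∃ f : Fin n → α, (∀ i, IsAtomOf S (f i)) ∧ x = ∑ i, f i

/-- The set of lengths of `x` in `S`. -/
def lengthsOf {α : Type*} [AddCommMonoid α] (S : AddSubmonoid α) (x : α) : Set ℕ :=
  {n | IsLengthOf S x n}

/-- `S` is atomic: every nonzero element is a finite sum of atoms. -/
def AtomicM {α : Type*} [AddCommMonoid α] (S : AddSubmonoid α) : Prop :=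
  ∀ x ∈ S, x ≠ 0 → ∃ n : ℕ, IsLengthOf S x n

/-- The system of sets of lengths of `M`. -/
def systemOfLengths (M : AddSubmonoid ℚ) : Set (Set ℕ) :=
  {S | ∃ x ∈ M, lengthsOf M x = S}

/-- The elementary Puiseux monoid ⟨1/p : p prime⟩. -/
def elemPM : AddSubmonoid ℚ :=
  AddSubmonoid.closure {q : ℚ | ∃ p : ℕ, p.Prime ∧ q = 1 / p}

/-- If a natural number is written as `∑ cᵢ / pᵢ` with distinct primes `pᵢ`,
then `pᵢ ∣ cᵢ` for every `i`. -/
theorem stmt16 (k : ℕ) (p : Fin k → ℕ) (hp : ∀ i, (p i).Prime)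
    (hinj : Function.Injective p) (c : Fin k → ℕ) (n : ℕ)
    (heq : (n : ℚ) = ∑ i, (c i : ℚ) / (p i : ℚ)) :
    ∀ i, p i ∣ c i := by
  intro i
  set P : ℕ := ∏ j, p j with hP
  set Q : Fin k → ℕ := fun j => ∏ l ∈ Finset.univ.erase j, p l with hQ
  have hfac : ∀ j, P = p j * Q j := fun j =>
    (Finset.mul_prod_erase Finset.univ p (Finset.mem_univ j)).symm
  have hpne : ∀ j, ((p j : ℚ)) ≠ 0 := fun j =>
    Nat.cast_ne_zero.mpr (hp j).pos.ne'
  have keyN : n * P = ∑ j, c j * Q j := by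
    have key : ((n * P : ℕ) : ℚ) = ((∑ j, c j * Q j : ℕ) : ℚ) := by
      push_cast
      rw [heq, Finset.sum_mul]
      refine Finset.sum_congr rfl fun j _ => ?_
      rw [hfac j]
      push_cast
      rw [div_mul_eq_mul_div, mul_left_comm, mul_div_cancel_left₀ _ (hpne j)]
    exact_mod_cast key
  have hsplit : ∑ j, c j * Q j = c i * Q i + ∑ j ∈ Finset.univ.erase i, c j * Q j :=
    (Finset.add_sum_erase Finset.univ _ (Finset.mem_univ i)).symm
  have h1 : p i ∣ n * P := ⟨n * Q i, by rw [hfac i]; ring⟩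
  have h2 : p i ∣ ∑ j ∈ Finset.univ.erase i, c j * Q j := by
    refine Finset.dvd_sum fun j hj => Dvd.dvd.mul_left ?_ _
    exact Finset.dvd_prod_of_mem p
      (Finset.mem_erase.mpr ⟨fun h => (Finset.mem_erase.mp hj).1 h.symm, Finset.mem_univ i⟩)
  have hdvd : p i ∣ c i * Q i := by
    have := keyN ▸ h1
    rw [hsplit] at this
    exact (Nat.dvd_add_right h2).mp (by rwa [add_comm] at this)
  rcases (hp i).dvd_mul.mp hdvd with h | h
  · exact h
  · exfalso
    obtain ⟨l, hl, hdl⟩ := (hp i).prime.exists_mem_finset_dvd (hQ ▸ h)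
    have : p i = p l := ((Nat.prime_dvd_prime_iff_eq (hp i) (hp l)).mp hdl)
    exact (Finset.mem_erase.mp hl).1 (hinj this.symm)
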